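/- The number of n-tuples (v_1,...,v_n) with entries in {0,1,2} satisfying the condition that v_i = 1 implies i > 1 and v_j ≠ 0 for all j < i, equals 2^(n-2) * (n+3) for all n ≥ 1 (interpreting 2^(-1)*(4) = 2 for n = 1; equivalently, for n ≥ 2 the count is 2^(n-2)*(n+3)). -/

import Mathlib

/-- A ★-sequence: `v i = 1` implies `i > 0` and all earlier entries are nonzero. -/
def StarSeq {n : ℕ} (v : Fin n → Fin 3) : Prop :=
  ∀ i, v i = 1 → 0 < i.val ∧ ∀ j, j < i → v j ≠ 0


def WeakStar {n : ℕ} (v : Fin n → Fin 3) : Prop :=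
  ∀ i, v i = 1 → ∀ j, j < i → v j ≠ 0

/-- Split a subtype of functions on `Fin (n+1)` by the value at 0. -/
def consSplit {n : ℕ} (P : (Fin (n + 1) → Fin 3) → Prop) :
    {v : Fin (n + 1) → Fin 3 // P v} ≃ Σ a : Fin 3, {w : Fin n → Fin 3 // P (Fin.cons a w)} where
  toFun v := ⟨v.1 0, Fin.tail v.1, by
    have := v.2; rwa [show Fin.cons (v.1 0) (Fin.tail v.1) = v.1 from Fin.cons_self_tail v.1]⟩
  invFun x := ⟨Fin.cons x.1 x.2.1, x.2.2⟩
  left_inv v := Subtype.ext (Fin.cons_self_tail v.1)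
  right_inv x := by
    rcases x with ⟨a, w, h⟩
    simp [Fin.tail_cons]
    exact HEq.rfl

open Classical in
theorem card_consSplit {n : ℕ} (P : (Fin (n + 1) → Fin 3) → Prop) :
    Nat.card {v : Fin (n + 1) → Fin 3 // P v}
      = ∑ a : Fin 3, Nat.card {w : Fin n → Fin 3 // P (Fin.cons a w)} := by
  rw [Nat.card_congr (consSplit P), Nat.card_eq_fintype_card, Fintype.card_sigma]
  simp [Nat.card_eq_fintype_card]

theorem card_noOne (n : ℕ) :
    Nat.card {w : Fin n → Fin 3 // ∀ i, w i ≠ 1} = 2 ^ n := by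
  rw [Nat.card_congr (Equiv.subtypePiEquivPi (p := fun _ x => x ≠ 1)), Nat.card_pi]
  have : Nat.card {x : Fin 3 // x ≠ 1} = 2 := by
    rw [Nat.card_eq_fintype_card]; decide
  simp [this]

theorem weakStar_cons_zero {n : ℕ} (w : Fin n → Fin 3) :
    WeakStar (Fin.cons 0 w) ↔ ∀ i, w i ≠ 1 := by
  constructor
  · intro h i hi
    exact h i.succ (by simpa using hi) 0 i.succ_pos (by simp)
  · intro h i hi
    exfalso
    refine Fin.cases ?_ (fun k hk => ?_) i hi
    · intro h0; exact absurd (by simpa using h0) (by decide : ¬(0 : Fin 3) = 1)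
    · exact h k (by simpa using hk)

theorem weakStar_cons_ne {n : ℕ} (a : Fin 3) (ha : a ≠ 0) (w : Fin n → Fin 3) :
    WeakStar (Fin.cons a w) ↔ WeakStar w := by
  constructor
  · intro h i hi j hj
    have := h i.succ (by simpa using hi) j.succ (by simpa using hj)
    simpa using this
  · intro h i
    refine Fin.cases ?_ (fun k hk j => ?_) i
    · intro _ j hj
      exact absurd hj (Fin.not_lt_zero j)
    · refine Fin.cases ?_ (fun m hm hm0 => ?_) j
      · intro _ h0; exact ha (by simpa using h0)
      · exact h k (by simpa using hk) m (by simpa using hm) (by simpa using hm0)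

theorem starSeq_cons_zero {n : ℕ} (w : Fin n → Fin 3) :
    StarSeq (Fin.cons 0 w) ↔ ∀ i, w i ≠ 1 := by
  constructor
  · intro h i hi
    exact (h i.succ (by simpa using hi)).2 0 i.succ_pos (by simp)
  · intro h i hi
    exfalso
    refine Fin.cases ?_ (fun k hk => ?_) i hi
    · intro h0; exact absurd (by simpa using h0) (by decide : ¬(0 : Fin 3) = 1)
    · exact h k (by simpa using hk)

theorem not_starSeq_cons_one {n : ℕ} (w : Fin n → Fin 3) :
    ¬ StarSeq (Fin.cons 1 w) := by
  intro h
  exact absurd (h 0 (by simp)).1 (by simp)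

theorem starSeq_cons_two {n : ℕ} (w : Fin n → Fin 3) :
    StarSeq (Fin.cons 2 w) ↔ WeakStar w := by
  constructor
  · intro h i hi j hj
    have := (h i.succ (by simpa using hi)).2 j.succ (by simpa using hj)
    simpa using this
  · intro h i
    refine Fin.cases ?_ (fun k hk => ?_) i
    · intro h0; exact absurd (by simpa using h0) (by decide : ¬(2 : Fin 3) = 1)
    · refine ⟨k.succ_pos, fun j => ?_⟩
      refine Fin.cases ?_ (fun m hm hm0 => ?_) j
      · intro _ h0; exact absurd (by simpa using h0) (by decide : ¬(2 : Fin 3) = 0)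
      · exact h k (by simpa using hk) m (by simpa using hm) (by simpa using hm0)

theorem two_mul_card_weak (n : ℕ) :
    2 * Nat.card {v : Fin n → Fin 3 // WeakStar v} = 2 ^ n * (n + 2) := by
  induction n with
  | zero =>
    have hu : Unique {v : Fin 0 → Fin 3 // WeakStar v} :=
      ⟨⟨⟨fun i => i.elim0, fun i => i.elim0⟩⟩, fun v => Subtype.ext (funext fun i => i.elim0)⟩
    rw [Nat.card_unique]
    norm_num
  | succ n ih =>
    rw [card_consSplit, Fin.sum_univ_three]
    have h0 : Nat.card {w : Fin n → Fin 3 // WeakStar (Fin.cons 0 w)} = 2 ^ n := by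
      rw [Nat.card_congr (Equiv.subtypeEquivRight fun w => weakStar_cons_zero w)]
      exact card_noOne n
    have h1 : Nat.card {w : Fin n → Fin 3 // WeakStar (Fin.cons 1 w)}
        = Nat.card {v : Fin n → Fin 3 // WeakStar v} :=
      Nat.card_congr (Equiv.subtypeEquivRight fun w => weakStar_cons_ne 1 (by decide) w)
    have h2 : Nat.card {w : Fin n → Fin 3 // WeakStar (Fin.cons 2 w)}
        = Nat.card {v : Fin n → Fin 3 // WeakStar v} :=
      Nat.card_congr (Equiv.subtypeEquivRight fun w => weakStar_cons_ne 2 (by decide) w)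
    rw [h0, h1, h2]
    set g := Nat.card {v : Fin n → Fin 3 // WeakStar v} with hg
    have : 2 * (2 ^ n + g + g) = 2 ^ n * 2 + 2 * (2 * g) := by ring
    rw [this, ih, pow_succ]
    ring

theorem four_mul_card_star (n : ℕ) :
    4 * Nat.card {v : Fin (n + 1) → Fin 3 // StarSeq v} = 2 ^ (n + 1) * (n + 4) := by
  rw [card_consSplit, Fin.sum_univ_three]
  have h0 : Nat.card {w : Fin n → Fin 3 // StarSeq (Fin.cons 0 w)} = 2 ^ n := by
    rw [Nat.card_congr (Equiv.subtypeEquivRight fun w => starSeq_cons_zero w)]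
    exact card_noOne n
  have h1 : Nat.card {w : Fin n → Fin 3 // StarSeq (Fin.cons 1 w)} = 0 := by
    have : IsEmpty {w : Fin n → Fin 3 // StarSeq (Fin.cons 1 w)} :=
      ⟨fun x => not_starSeq_cons_one _ x.2⟩
    exact Nat.card_of_isEmpty
  have h2 : Nat.card {w : Fin n → Fin 3 // StarSeq (Fin.cons 2 w)}
      = Nat.card {v : Fin n → Fin 3 // WeakStar v} :=
    Nat.card_congr (Equiv.subtypeEquivRight fun w => starSeq_cons_two w)
  rw [h0, h1, h2]
  set g := Nat.card {v : Fin n → Fin 3 // WeakStar v} with hg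
  have hgg := two_mul_card_weak n
  have : 4 * (2 ^ n + 0 + g) = 2 ^ n * 4 + 2 * (2 * g) := by ring
  rw [this, hgg, pow_succ]
  ring

/-- The number of ★-sequences of length `n` is `2^(n-2) * (n+3)` for `n ≥ 2`;
uniformly, `4 * count = 2^n * (n+3)` for all `n ≥ 1`. -/
theorem star_count (n : ℕ) (hn : 1 ≤ n) :
    4 * Nat.card {v : Fin n → Fin 3 // StarSeq v} = 2 ^ n * (n + 3) ∧
    (2 ≤ n → Nat.card {v : Fin n → Fin 3 // StarSeq v} = 2 ^ (n - 2) * (n + 3)) := by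
  obtain ⟨m, rfl⟩ : ∃ m, n = m + 1 := ⟨n - 1, by omega⟩
  have key := four_mul_card_star m
  constructor
  · rw [key]
  · intro h2
    obtain ⟨k, rfl⟩ : ∃ k, m = k + 1 := ⟨m - 1, by omega⟩
    have hk : (k + 1 + 1 - 2) = k := by omega
    rw [hk]
    have h4 : 4 * Nat.card {v : Fin (k + 1 + 1) → Fin 3 // StarSeq v}
        = 4 * (2 ^ k * (k + 1 + 1 + 3)) := by
      rw [key]; ring
    omega
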